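/- Let G = (V, E) be a nonempty first order reaction graph embedded in ℕ₀^d (every source y of an edge satisfies ‖y‖₁ ≤ 1) with no redundant species, and assume G is both 𝟙-endotactic and (−𝟙)-endotactic where 𝟙 = (1,...,1). Then the following are equivalent: (1) the zero complex 0 is not a vertex of G; (2) (y'−y)·𝟙 = 0 for every edge (y,y') (conservation of total molecularity); (3) every source of G has ℓ₁-norm equal to the maximal ℓ₁-norm of sources (homogeneity). Moreover in this case d > 1 and every vertex of G is a standard basis vector e_i. -/
import Mathlib

open Matrix Finset
open scoped Matrix Classical

abbrev Vec (d : ℕ) := Fin d → ℝ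
abbrev Edge (d : ℕ) := Vec d × Vec d

/-- Sources of edges whose reaction vector is not orthogonal to `u`. -/
def srcU {d : ℕ} (E : Finset (Edge d)) (u : Vec d) : Set (Vec d) :=
  {y | ∃ y', (y, y') ∈ E ∧ (y' - y) ⬝ᵥ u ≠ 0}

/-- `G` is `u`-endotactic: no `u`-endotacticity violating reaction. -/
def uEndotactic {d : ℕ} (E : Finset (Edge d)) (u : Vec d) : Prop :=
  ¬ ∃ y y', (y, y') ∈ E ∧ 0 < (y' - y) ⬝ᵥ u ∧ ∀ z ∈ srcU E u, z ⬝ᵥ u ≤ y ⬝ᵥ u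

def Endotactic {d : ℕ} (E : Finset (Edge d)) : Prop := ∀ u : Vec d, uEndotactic E u

/-- Reachability by a directed path. -/
def Reach {d : ℕ} (E : Finset (Edge d)) : Vec d → Vec d → Prop :=
  Relation.ReflTransGen (fun a b => (a, b) ∈ E)

def IsEig {d : ℕ} (A : Matrix (Fin d) (Fin d) ℝ) (μ : ℂ) : Prop :=
  ∃ v : Fin d → ℂ, v ≠ 0 ∧ (A.map Complex.ofReal).mulVec v = μ • v

def InV {d : ℕ} (E : Finset (Edge d)) (y : Vec d) : Prop :=
  ∃ e ∈ E, e.1 = y ∨ e.2 = y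

def IsSource {d : ℕ} (E : Finset (Edge d)) (y : Vec d) : Prop :=
  ∃ y', (y, y') ∈ E

lemma natvec_nonneg {d : ℕ} (y : Fin d → ℝ) (h : ∀ i, ∃ n : ℕ, y i = n) (i : Fin d) :
    0 ≤ y i := by obtain ⟨n, hn⟩ := h i; rw [hn]; positivity

lemma natvec_eq_zero {d : ℕ} (y : Fin d → ℝ) (h : ∀ i, ∃ n : ℕ, y i = n)
    (hs : ∑ i, y i = 0) : y = 0 := by
  funext i
  have := (Finset.sum_eq_zero_iff_of_nonneg (fun j _ => natvec_nonneg y h j)).mp hs i (mem_univ i)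
  simpa using this

lemma natvec_single {d : ℕ} (y : Fin d → ℝ) (h : ∀ i, ∃ n : ℕ, y i = n)
    (hs : ∑ i, y i = 1) : ∃ i, y = Pi.single i 1 := by
  choose f hf using h
  have hsum : (∑ i, f i : ℕ) = 1 := by
    have : ((∑ i, f i : ℕ) : ℝ) = 1 := by rw [← hs]; simp [hf]
    exact_mod_cast this
  obtain ⟨i, hi, hrest⟩ : ∃ i, f i = 1 ∧ ∀ j, j ≠ i → f j = 0 := by
    have hne : ∃ i, f i ≠ 0 := by
      by_contra hc
      push_neg at hc
      simp [hc] at hsum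
    obtain ⟨i, hi⟩ := hne
    have hle : f i ≤ 1 := hsum ▸ Finset.single_le_sum (fun j _ => Nat.zero_le _) (mem_univ i)
    have hfi : f i = 1 := le_antisymm hle (Nat.one_le_iff_ne_zero.mpr hi)
    have herase : ∑ j ∈ univ.erase i, f j = 0 := by
      have := Finset.add_sum_erase univ f (mem_univ i)
      omega
    refine ⟨i, hfi, fun j hj => ?_⟩
    exact (Finset.sum_eq_zero_iff.mp herase) j (Finset.mem_erase.mpr ⟨hj, mem_univ j⟩)
  refine ⟨i, funext fun j => ?_⟩
  by_cases hji : j = i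
  · subst hji; simp [hf, hi]
  · simp [hf, hrest j hji, Pi.single_eq_of_ne hji]

theorem stmt10 {d : ℕ} (E : Finset (Edge d))
    (hne : E.Nonempty)
    (hsimple : ∀ e ∈ E, e.1 ≠ e.2)
    (hnat : ∀ y, InV E y → ∀ i, ∃ n : ℕ, y i = (n : ℝ))
    (hfo : ∀ y, IsSource E y → ∑ i, y i ≤ 1)
    (hnored : ∀ i : Fin d, ∃ e ∈ E, e.2 i ≠ e.1 i)
    (hplus : uEndotactic E (fun _ => (1 : ℝ)))
    (hminus : uEndotactic E (fun _ => (-1 : ℝ))) :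
    (¬ InV E (0 : Vec d) ↔ ∀ e ∈ E, ∑ i, (e.2 i - e.1 i) = 0) ∧
    ((∀ e ∈ E, ∑ i, (e.2 i - e.1 i) = 0) ↔
      (∀ y z, IsSource E y → IsSource E z → ∑ i, y i = ∑ i, z i)) ∧
    (¬ InV E (0 : Vec d) →
      1 < d ∧ ∀ y, InV E y → ∃ i : Fin d, y = Pi.single i 1) := by
  -- dot products with ±𝟙
  have hdot1 : ∀ v : Vec d, v ⬝ᵥ (fun _ => (1 : ℝ)) = ∑ i, v i := by
    intro v; simp [dotProduct]
  have hdotm : ∀ v : Vec d, v ⬝ᵥ (fun _ => (-1 : ℝ)) = -∑ i, v i := by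
    intro v; simp [dotProduct]
  -- sources are vertices
  have hsrcV : ∀ y, IsSource E y → InV E y := by
    rintro y ⟨y', hy'⟩; exact ⟨(y, y'), hy', Or.inl rfl⟩
  -- each source is 0 or has sum 1
  have hsrc01 : ∀ y, IsSource E y → y = 0 ∨ ∑ i, y i = 1 := by
    intro y hy
    have hn := hnat y (hsrcV y hy)
    choose f hf using hn
    have hsum : (∑ i, y i) = ((∑ i, f i : ℕ) : ℝ) := by simp [hf]
    have hle : (∑ i, f i : ℕ) ≤ 1 := by
      have := hfo y hy
      rw [hsum] at this
      exact_mod_cast this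
    interval_cases h : (∑ i, f i : ℕ)
    · left
      exact natvec_eq_zero y (fun i => ⟨f i, hf i⟩) (by rw [hsum]; norm_num)
    · right; rw [hsum]; norm_num
  -- homogeneity implies conservation (uses endotacticity)
  have homog_cons : (∀ y z, IsSource E y → IsSource E z → ∑ i, y i = ∑ i, z i) →
      ∀ e ∈ E, ∑ i, (e.2 i - e.1 i) = 0 := by
    intro hh e he
    by_contra hc
    have hkey : ∑ i, (e.2 - e.1) i = ∑ i, e.2 i - ∑ i, e.1 i := by
      simp [Finset.sum_sub_distrib]
    rw [Finset.sum_sub_distrib] at hc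
    rcases lt_or_gt_of_ne hc with hlt | hgt
    · exact hminus ⟨e.1, e.2, he, by rw [hdotm, hkey]; linarith, fun z hz => by
        obtain ⟨w, hw, _⟩ := hz
        have := hh z e.1 ⟨w, hw⟩ ⟨e.2, he⟩
        rw [hdotm, hdotm, this]⟩
    · exact hplus ⟨e.1, e.2, he, by rw [hdot1, hkey]; linarith, fun z hz => by
        obtain ⟨w, hw, _⟩ := hz
        have := hh z e.1 ⟨w, hw⟩ ⟨e.2, he⟩
        rw [hdot1, hdot1, this]⟩
  -- conservation implies no source is 0, hence all sources have sum 1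
  have cons_src1 : (∀ e ∈ E, ∑ i, (e.2 i - e.1 i) = 0) →
      ∀ y, IsSource E y → ∑ i, y i = 1 := by
    intro hcons y hy
    rcases hsrc01 y hy with h0 | h1
    · exfalso
      obtain ⟨y', hy'⟩ := hy
      subst h0
      have := hcons (0, y') hy'
      simp at this
      have hy'0 : y' = 0 :=
        natvec_eq_zero y' (hnat y' ⟨((0 : Vec d), y'), hy', Or.inr rfl⟩) this
      exact hsimple (0, y') hy' (by simp [hy'0])
    · exact h1
  -- (1) → all sources sum 1
  have h0_src1 : ¬ InV E (0 : Vec d) → ∀ y, IsSource E y → ∑ i, y i = 1 := by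
    intro h0 y hy
    rcases hsrc01 y hy with hz | h1
    · exact absurd (hz ▸ hsrcV y hy) h0
    · exact h1
  -- (1) → (2)
  have h12 : ¬ InV E (0 : Vec d) → ∀ e ∈ E, ∑ i, (e.2 i - e.1 i) = 0 := by
    intro h0
    exact homog_cons (fun y z hy hz => by
      rw [h0_src1 h0 y hy, h0_src1 h0 z hz])
  -- (2) → (1)
  have h21 : (∀ e ∈ E, ∑ i, (e.2 i - e.1 i) = 0) → ¬ InV E (0 : Vec d) := by
    rintro hcons ⟨e, he, h1 | h2⟩
    · have := cons_src1 hcons e.1 ⟨e.2, he⟩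
      rw [h1] at this
      simp at this
    · have hs1 := cons_src1 hcons e.1 ⟨e.2, he⟩
      have := hcons e he
      rw [Finset.sum_sub_distrib, h2] at this
      simp [hs1] at this
  refine ⟨⟨h12, h21⟩, ⟨?_, homog_cons⟩, ?_⟩
  · intro hcons y z hy hz
    rw [cons_src1 hcons y hy, cons_src1 hcons z hz]
  · intro h0
    have hcons := h12 h0
    have hvert : ∀ y, InV E y → ∃ i : Fin d, y = Pi.single i 1 := by
      intro y hyV
      obtain ⟨e, he, h1 | h2⟩ := hyV
      · exact natvec_single y (hnat y ⟨e, he, Or.inl h1⟩)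
          (h1 ▸ cons_src1 hcons e.1 ⟨e.2, he⟩)
      · refine natvec_single y (hnat y ⟨e, he, Or.inr h2⟩) ?_
        have hs1 := cons_src1 hcons e.1 ⟨e.2, he⟩
        have := hcons e he
        rw [Finset.sum_sub_distrib, h2] at this
        linarith
    refine ⟨?_, hvert⟩
    obtain ⟨e, he⟩ := hne
    obtain ⟨i, hi⟩ := hvert e.1 ⟨e, he, Or.inl rfl⟩
    obtain ⟨j, hj⟩ := hvert e.2 ⟨e, he, Or.inr rfl⟩
    have hij : i ≠ j := by
      rintro rfl
      exact hsimple e he (hi.trans hj.symm)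
    have := i.isLt
    have := j.isLt
    have : (i : ℕ) ≠ (j : ℕ) := fun h => hij (Fin.ext h)
    omega
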